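/- Let f, ε : ℝⁿ → ℝ be differentiable functions with no common zero, and set g := xₙ · f²/(f² + ε²). Suppose that for each x ∈ ℝⁿ with xₙ ≤ 0 one has |f(x)| ≥ 1, |xₙ|·|∂f/∂xₙ(x)|·ε(x)² < 1/16, |xₙ·ε(x)| < 1/8, |ε(x)| < 1/2 and |∂ε/∂xₙ(x)| < 1/4. Then ∂g/∂xₙ(x) > 1/2 for every x with xₙ ≤ 0, and ∂g/∂xₙ(x) = 1 at every point x where ε(x) = 0. -/

import Mathlib

theorem key_fderiv (n : ℕ) (f ε : (Fin (n + 1) → ℝ) → ℝ)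
    (hf : Differentiable ℝ f) (hε : Differentiable ℝ ε)
    (x : Fin (n+1) → ℝ) (hx0 : (f x)^2 + (ε x)^2 ≠ 0) :
    fderiv ℝ (fun y => y (Fin.last n) * (f y) ^ 2 / ((f y) ^ 2 + (ε y) ^ 2)) x
      (Pi.single (Fin.last n) 1) =
    ((f x)^2 * ((f x)^2 + (ε x)^2)
      + 2 * x (Fin.last n) * f x * (ε x)^2 * (fderiv ℝ f x (Pi.single (Fin.last n) 1))
      - 2 * x (Fin.last n) * (f x)^2 * ε x * (fderiv ℝ ε x (Pi.single (Fin.last n) 1)))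
      / ((f x)^2 + (ε x)^2)^2 := by
  set e : Fin (n+1) → ℝ := Pi.single (Fin.last n) 1 with he
  set c : ℝ → (Fin (n+1) → ℝ) := fun s => x + s • e with hcdef
  have hc0 : c 0 = x := by simp [hcdef]
  have hc : HasDerivAt c e 0 := by
    have := ((hasDerivAt_id (0:ℝ)).smul_const e).const_add x
    simpa [hcdef] using this
  have d1 : DifferentiableAt ℝ (fun y : Fin (n+1) → ℝ => y (Fin.last n) * (f y) ^ 2) x :=
    ((differentiable_apply (Fin.last n)) x).mul ((hf x).pow 2)
  have d2 : DifferentiableAt ℝ (fun y : Fin (n+1) → ℝ => (f y) ^ 2 + (ε y) ^ 2) x :=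
    ((hf x).pow 2).add ((hε x).pow 2)
  have hgd : DifferentiableAt ℝ
      (fun y : Fin (n+1) → ℝ => y (Fin.last n) * (f y) ^ 2 / ((f y) ^ 2 + (ε y) ^ 2)) x :=
    by
      have hrw : (fun y : Fin (n+1) → ℝ => y (Fin.last n) * (f y) ^ 2 / ((f y) ^ 2 + (ε y) ^ 2))
          = fun y => (y (Fin.last n) * (f y) ^ 2) * ((f y) ^ 2 + (ε y) ^ 2)⁻¹ := by
        funext y; rw [div_eq_mul_inv]
      rw [hrw]; exact d1.mul (d2.inv hx0)
  have hgx := hgd.hasFDerivAt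
  rw [← hc0] at hgx
  have H1 := hgx.comp_hasDerivAt 0 hc
  rw [hc0] at H1
  have hfx := (hf x).hasFDerivAt
  rw [← hc0] at hfx
  have hfc := hfx.comp_hasDerivAt 0 hc
  rw [hc0] at hfc
  have hεx := (hε x).hasFDerivAt
  rw [← hc0] at hεx
  have hεc := hεx.comp_hasDerivAt 0 hc
  rw [hc0] at hεc
  have hlin : HasDerivAt (fun s : ℝ => x (Fin.last n) + s) 1 0 :=
    (hasDerivAt_id (0:ℝ)).const_add _
  have hcomp : ((fun y : Fin (n+1) → ℝ => y (Fin.last n) * (f y) ^ 2 / ((f y) ^ 2 + (ε y) ^ 2)) ∘ c)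
      = fun s => (x (Fin.last n) + s) * (f (c s)) ^ 2 / ((f (c s)) ^ 2 + (ε (c s)) ^ 2) := by
    funext s
    simp [Function.comp, hcdef, he, Pi.single_eq_same]
  rw [hcomp] at H1
  have hp : HasDerivAt (fun s => (f (c s)) ^ 2) (2 * f x * fderiv ℝ f x e) 0 := by
    have := hfc.fun_pow 2
    simpa [hc0, Function.comp, mul_assoc] using this
  have hq : HasDerivAt (fun s => (ε (c s)) ^ 2) (2 * ε x * fderiv ℝ ε x e) 0 := by
    have := hεc.fun_pow 2
    simpa [hc0, Function.comp, mul_assoc] using this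
  have hnum := hlin.fun_mul hp
  have hden := hp.fun_add hq
  have hden0 : (f (c 0))^2 + (ε (c 0))^2 ≠ 0 := by rw [hc0]; exact hx0
  have H2 := hnum.fun_div hden hden0
  rw [hc0] at H2
  have hval := H1.unique H2
  rw [hval]
  field_simp
  ring


theorem arith_bound (t a b A B : ℝ) (ha0 : 1 ≤ |a|)
    (h2 : |t| * |A| * b ^ 2 < 1 / 16) (h3 : |t * b| < 1 / 8)
    (h4 : |b| < 1 / 2) (h5 : |B| < 1 / 4) :
    1 / 2 < (a ^ 2 * (a ^ 2 + b ^ 2) + 2 * t * a * b ^ 2 * A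
      - 2 * t * a ^ 2 * b * B) / (a ^ 2 + b ^ 2) ^ 2 := by
  have ha1 : (1:ℝ) ≤ a ^ 2 := by nlinarith [sq_abs a]
  have habs_a : |a| ≤ a ^ 2 := by nlinarith [sq_abs a]
  have hb2 : b ^ 2 < 1/4 := by nlinarith [sq_abs b, abs_nonneg b]
  have hDpos : (0:ℝ) < a ^ 2 + b ^ 2 := by nlinarith [sq_nonneg b]
  have e1 : |2 * t * a * b ^ 2 * A| = 2 * |a| * (|t| * |A| * b ^ 2) := by
    rw [abs_mul, abs_mul, abs_mul, abs_mul, abs_of_nonneg (sq_nonneg b)]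
    norm_num
    ring
  have e1' : |2 * t * a * b ^ 2 * A| < 2 * |a| * (1/16) := by
    rw [e1]
    have hapos : (0:ℝ) < |a| := lt_of_lt_of_le one_pos ha0
    exact mul_lt_mul_of_pos_left h2 (by positivity)
  have l1 : -(a ^ 2 / 8) < 2 * t * a * b ^ 2 * A := by
    have := neg_abs_le (2 * t * a * b ^ 2 * A)
    nlinarith [e1', habs_a, abs_nonneg (2 * t * a * b ^ 2 * A)]
  have e2 : |2 * t * a ^ 2 * b * B| = 2 * a ^ 2 * (|t * b| * |B|) := by
    rw [abs_mul, abs_mul, abs_mul, abs_mul, abs_of_nonneg (sq_nonneg a)]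
    norm_num
    ring
  have e2' : |2 * t * a ^ 2 * b * B| < 2 * a ^ 2 * ((1/8) * (1/4)) := by
    rw [e2]
    have hprod : |t * b| * |B| < (1/8) * (1/4) :=
      mul_lt_mul'' h3 h5 (abs_nonneg _) (abs_nonneg _)
    have hapos : (0:ℝ) < a ^ 2 := lt_of_lt_of_le one_pos ha1
    exact mul_lt_mul_of_pos_left hprod (by positivity)
  have l2 : 2 * t * a ^ 2 * b * B < a ^ 2 / 16 := by
    have := le_abs_self (2 * t * a ^ 2 * b * B)
    nlinarith [e2']
  rw [lt_div_iff₀ (by positivity : (0:ℝ) < (a ^ 2 + b ^ 2) ^ 2)]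
  have hu : a ^ 2 ≤ a ^ 2 * a ^ 2 := by nlinarith
  have hv : b ^ 2 * b ^ 2 ≤ b ^ 2 / 4 := by nlinarith [sq_nonneg b]
  nlinarith [ha1, hb2, l1, l2, hu, hv, sq_nonneg b]

/-- Derivative bounds for g := xₙ f²/(f²+ε²) under the stated estimates on
{xₙ ≤ 0}. -/
theorem stmt_8 (n : ℕ) (f ε : (Fin (n + 1) → ℝ) → ℝ)
    (hf : Differentiable ℝ f) (hε : Differentiable ℝ ε)
    (hnz : ∀ x, f x ≠ 0 ∨ ε x ≠ 0)
    (g : (Fin (n + 1) → ℝ) → ℝ)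
    (hg : g = fun x => x (Fin.last n) * (f x) ^ 2 / ((f x) ^ 2 + (ε x) ^ 2))
    (h1 : ∀ x, x (Fin.last n) ≤ 0 → 1 ≤ |f x|)
    (h2 : ∀ x, x (Fin.last n) ≤ 0 →
      |x (Fin.last n)| * |fderiv ℝ f x (Pi.single (Fin.last n) 1)| * (ε x) ^ 2 < 1 / 16)
    (h3 : ∀ x, x (Fin.last n) ≤ 0 → |x (Fin.last n) * ε x| < 1 / 8)
    (h4 : ∀ x, x (Fin.last n) ≤ 0 → |ε x| < 1 / 2)
    (h5 : ∀ x, x (Fin.last n) ≤ 0 →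
      |fderiv ℝ ε x (Pi.single (Fin.last n) 1)| < 1 / 4) :
    (∀ x, x (Fin.last n) ≤ 0 →
      1 / 2 < fderiv ℝ g x (Pi.single (Fin.last n) 1)) ∧
    (∀ x, ε x = 0 → fderiv ℝ g x (Pi.single (Fin.last n) 1) = 1) := by
  subst hg
  have hx0 : ∀ x, (f x)^2 + (ε x)^2 ≠ 0 := by
    intro x
    rcases hnz x with h | h
    · positivity
    · positivity
  constructor
  · intro x hx
    rw [key_fderiv n f ε hf hε x (hx0 x)]
    exact arith_bound (x (Fin.last n)) (f x) (ε x)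
      (fderiv ℝ f x (Pi.single (Fin.last n) 1)) (fderiv ℝ ε x (Pi.single (Fin.last n) 1))
      (h1 x hx) (h2 x hx) (h3 x hx) (h4 x hx) (h5 x hx)
  · intro x hε0
    rw [key_fderiv n f ε hf hε x (hx0 x), hε0]
    have hfx : f x ≠ 0 := by
      rcases hnz x with h | h
      · exact h
      · exact absurd hε0 h
    field_simp
    ring
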